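/- Any rope cover R of a finite arc set E can be transformed into a rope cover R' with |R'| ≤ |R| in which fewer pairs of leaning arcs exist: specifically, if r1, r2 ∈ R with r1 leaning on r2, then there is a rope cover R' with |R'| ≤ |R| and strictly smaller total sum of arc lengths. -/
import Mathlib


def leansOn (a b : ℕ × ℕ) : Prop :=
  b.1 ≤ a.1 ∧ a.1 < a.2 ∧ a.2 ≤ b.2 ∧ a ≠ b ∧ (a.1 = b.1 ∨ a.2 = b.2)

def IsRopeCover (E R : Finset (ℕ × ℕ)) : Prop :=
  R ⊆ E ∧ ∀ a ∈ E \ R, ∃ b ∈ R, leansOn a b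

/-- Total sum of arc lengths of a set of arcs. -/
def totalLen (R : Finset (ℕ × ℕ)) : ℕ := ∑ a ∈ R, (a.2 - a.1)

lemma totalLen_erase (R : Finset (ℕ × ℕ)) (r : ℕ × ℕ) (hr : r ∈ R) :
    totalLen R = (r.2 - r.1) + totalLen (R.erase r) := by
  unfold totalLen
  exact (Finset.add_sum_erase _ (fun a => a.2 - a.1) hr).symm

lemma totalLen_insert (R : Finset (ℕ × ℕ)) (a : ℕ × ℕ) (ha : a ∉ R) :
    totalLen (insert a R) = (a.2 - a.1) + totalLen R := by
  unfold totalLen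
  rw [Finset.sum_insert ha]

/-- If a rope cover `R` contains two arcs `r1` leaning on `r2`, then it can be transformed
into a rope cover `R'` with `|R'| ≤ |R|` and strictly smaller total sum of arc lengths. -/
theorem ropeCover_improve (E : Finset (ℕ × ℕ)) (hE : ∀ a ∈ E, a.1 < a.2)
    (R : Finset (ℕ × ℕ)) (hR : IsRopeCover E R)
    (r1 r2 : ℕ × ℕ) (h1 : r1 ∈ R) (h2 : r2 ∈ R) (hlean : leansOn r1 r2) :
    ∃ R', IsRopeCover E R' ∧ R'.card ≤ R.card ∧ totalLen R' < totalLen R := by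
  obtain ⟨hsub, hcov⟩ := hR
  obtain ⟨hb1, hlt, hb2, hne, hends⟩ := hlean
  have hr21 : r2 ∈ R.erase r1 := Finset.mem_erase.mpr ⟨fun h => hne (h ▸ rfl), h2⟩
  have hlen1 : 0 < r1.2 - r1.1 := by omega
  have hcard : R.card = (R.erase r1).card + 1 := by
    rw [Finset.card_erase_of_mem h1]
    have : 0 < R.card := Finset.card_pos.mpr ⟨r1, h1⟩
    omega
  rcases hends with heq | heq
  · -- left endpoints coincide
    have hlt2 : r1.2 < r2.2 := by
      rcases lt_or_eq_of_le hb2 with h | h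
      · exact h
      · exact absurd (Prod.ext heq h) hne
    by_cases hSne : (E.filter (fun a => a.2 = r1.2 ∧ r1.1 < a.1)).Nonempty
    · obtain ⟨a, haS, hamin⟩ :=
        (E.filter (fun a => a.2 = r1.2 ∧ r1.1 < a.1)).exists_min_image (fun a => a.1) hSne
      rw [Finset.mem_filter] at haS
      obtain ⟨haE, ha2, ha1⟩ := haS
      have hane : a ≠ r1 := by
        intro h; rw [h] at ha1; omega
      refine ⟨insert a (R.erase r1), ⟨?_, ?_⟩, ?_, ?_⟩
      · intro x hx
        rcases Finset.mem_insert.mp hx with h | h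
        · exact h ▸ haE
        · exact hsub (Finset.mem_of_mem_erase h)
      · intro x hx
        rw [Finset.mem_sdiff, Finset.mem_insert, Finset.mem_erase] at hx
        obtain ⟨hxE, hx2⟩ := hx
        push_neg at hx2
        obtain ⟨hxa, hx2⟩ := hx2
        by_cases hxr1 : x = r1
        · exact ⟨r2, Finset.mem_insert.mpr (Or.inr hr21),
            hxr1 ▸ ⟨hb1, hlt, hb2, hne, Or.inl heq⟩⟩
        · have hxR : x ∉ R := fun h => (hx2 hxr1) h
          obtain ⟨b, hbR, hxb⟩ := hcov x (Finset.mem_sdiff.mpr ⟨hxE, hxR⟩)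
          by_cases hbr1 : b = r1
          · rw [hbr1] at hxb
            obtain ⟨hL1, hL2, hL3, hL4, hL5⟩ := hxb
            rcases hL5 with h5 | h5
            · refine ⟨r2, Finset.mem_insert.mpr (Or.inr hr21),
                ⟨by omega, hL2, by omega, ?_, Or.inl (by omega)⟩⟩
              intro h; rw [h] at hL3; omega
            · have hx1 : r1.1 < x.1 := by
                rcases lt_or_eq_of_le hL1 with h | h
                · exact h
                · exact absurd (Prod.ext h.symm h5) hxr1
              have hxmem : x ∈ E.filter (fun a => a.2 = r1.2 ∧ r1.1 < a.1) :=
                Finset.mem_filter.mpr ⟨hxE, h5, hx1⟩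
              have := hamin x hxmem
              refine ⟨a, Finset.mem_insert_self _ _,
                ⟨this, hL2, by omega, fun h => hxa h, Or.inr (by omega)⟩⟩
          · exact ⟨b, Finset.mem_insert.mpr (Or.inr (Finset.mem_erase.mpr ⟨hbr1, hbR⟩)), hxb⟩
      · calc (insert a (R.erase r1)).card ≤ (R.erase r1).card + 1 :=
              Finset.card_insert_le _ _
          _ = R.card := hcard.symm
      · have haa : a.1 < a.2 := hE a haE
        by_cases haR : a ∈ R.erase r1
        · rw [Finset.insert_eq_self.mpr haR]
          have := totalLen_erase R r1 h1
          omega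
        · rw [totalLen_insert _ _ haR]
          have := totalLen_erase R r1 h1
          omega
    · refine ⟨R.erase r1, ⟨fun x hx => hsub (Finset.mem_of_mem_erase hx), ?_⟩,
        (Finset.card_erase_of_mem h1) ▸ by omega, ?_⟩
      · intro x hx
        rw [Finset.mem_sdiff, Finset.mem_erase] at hx
        obtain ⟨hxE, hx2⟩ := hx
        push_neg at hx2
        by_cases hxr1 : x = r1
        · exact ⟨r2, hr21, hxr1 ▸ ⟨hb1, hlt, hb2, hne, Or.inl heq⟩⟩
        · have hxR : x ∉ R := fun h => (hx2 hxr1) h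
          obtain ⟨b, hbR, hxb⟩ := hcov x (Finset.mem_sdiff.mpr ⟨hxE, hxR⟩)
          by_cases hbr1 : b = r1
          · rw [hbr1] at hxb
            obtain ⟨hL1, hL2, hL3, hL4, hL5⟩ := hxb
            rcases hL5 with h5 | h5
            · refine ⟨r2, hr21, ⟨by omega, hL2, by omega, ?_, Or.inl (by omega)⟩⟩
              intro h; rw [h] at hL3; omega
            · exfalso
              have hx1 : r1.1 < x.1 := by
                rcases lt_or_eq_of_le hL1 with h | h
                · exact h
                · exact absurd (Prod.ext h.symm h5) hxr1
              exact hSne ⟨x, Finset.mem_filter.mpr ⟨hxE, h5, hx1⟩⟩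
          · exact ⟨b, Finset.mem_erase.mpr ⟨hbr1, hbR⟩, hxb⟩
      · have := totalLen_erase R r1 h1
        omega
  · -- right endpoints coincide
    have hlt2 : r2.1 < r1.1 := by
      rcases lt_or_eq_of_le hb1 with h | h
      · exact h
      · exact absurd (Prod.ext h.symm heq) hne
    by_cases hSne : (E.filter (fun a => a.1 = r1.1 ∧ a.2 < r1.2)).Nonempty
    · obtain ⟨a, haS, hamax⟩ :=
        (E.filter (fun a => a.1 = r1.1 ∧ a.2 < r1.2)).exists_max_image (fun a => a.2) hSne
      rw [Finset.mem_filter] at haS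
      obtain ⟨haE, ha1, ha2⟩ := haS
      have hane : a ≠ r1 := by
        intro h; rw [h] at ha2; omega
      refine ⟨insert a (R.erase r1), ⟨?_, ?_⟩, ?_, ?_⟩
      · intro x hx
        rcases Finset.mem_insert.mp hx with h | h
        · exact h ▸ haE
        · exact hsub (Finset.mem_of_mem_erase h)
      · intro x hx
        rw [Finset.mem_sdiff, Finset.mem_insert, Finset.mem_erase] at hx
        obtain ⟨hxE, hx2⟩ := hx
        push_neg at hx2
        obtain ⟨hxa, hx2⟩ := hx2
        by_cases hxr1 : x = r1
        · exact ⟨r2, Finset.mem_insert.mpr (Or.inr hr21),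
            hxr1 ▸ ⟨hb1, hlt, hb2, hne, Or.inr heq⟩⟩
        · have hxR : x ∉ R := fun h => (hx2 hxr1) h
          obtain ⟨b, hbR, hxb⟩ := hcov x (Finset.mem_sdiff.mpr ⟨hxE, hxR⟩)
          by_cases hbr1 : b = r1
          · rw [hbr1] at hxb
            obtain ⟨hL1, hL2, hL3, hL4, hL5⟩ := hxb
            rcases hL5 with h5 | h5
            · have hx2lt : x.2 < r1.2 := by
                rcases lt_or_eq_of_le hL3 with h | h
                · exact h
                · exact absurd (Prod.ext h5 h) hxr1
              have hxmem : x ∈ E.filter (fun a => a.1 = r1.1 ∧ a.2 < r1.2) :=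
                Finset.mem_filter.mpr ⟨hxE, h5, hx2lt⟩
              have := hamax x hxmem
              refine ⟨a, Finset.mem_insert_self _ _,
                ⟨by omega, hL2, this, fun h => hxa h, Or.inl (by omega)⟩⟩
            · refine ⟨r2, Finset.mem_insert.mpr (Or.inr hr21),
                ⟨by omega, hL2, by omega, ?_, Or.inr (by omega)⟩⟩
              intro h; rw [h] at hL1; omega
          · exact ⟨b, Finset.mem_insert.mpr (Or.inr (Finset.mem_erase.mpr ⟨hbr1, hbR⟩)), hxb⟩
      · calc (insert a (R.erase r1)).card ≤ (R.erase r1).card + 1 :=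
              Finset.card_insert_le _ _
          _ = R.card := hcard.symm
      · have haa : a.1 < a.2 := hE a haE
        by_cases haR : a ∈ R.erase r1
        · rw [Finset.insert_eq_self.mpr haR]
          have := totalLen_erase R r1 h1
          omega
        · rw [totalLen_insert _ _ haR]
          have := totalLen_erase R r1 h1
          omega
    · refine ⟨R.erase r1, ⟨fun x hx => hsub (Finset.mem_of_mem_erase hx), ?_⟩,
        (Finset.card_erase_of_mem h1) ▸ by omega, ?_⟩
      · intro x hx
        rw [Finset.mem_sdiff, Finset.mem_erase] at hx
        obtain ⟨hxE, hx2⟩ := hx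
        push_neg at hx2
        by_cases hxr1 : x = r1
        · exact ⟨r2, hr21, hxr1 ▸ ⟨hb1, hlt, hb2, hne, Or.inr heq⟩⟩
        · have hxR : x ∉ R := fun h => (hx2 hxr1) h
          obtain ⟨b, hbR, hxb⟩ := hcov x (Finset.mem_sdiff.mpr ⟨hxE, hxR⟩)
          by_cases hbr1 : b = r1
          · rw [hbr1] at hxb
            obtain ⟨hL1, hL2, hL3, hL4, hL5⟩ := hxb
            rcases hL5 with h5 | h5
            · exfalso
              have hx2lt : x.2 < r1.2 := by
                rcases lt_or_eq_of_le hL3 with h | h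
                · exact h
                · exact absurd (Prod.ext h5 h) hxr1
              exact hSne ⟨x, Finset.mem_filter.mpr ⟨hxE, h5, hx2lt⟩⟩
            · refine ⟨r2, hr21, ⟨by omega, hL2, by omega, ?_, Or.inr (by omega)⟩⟩
              intro h; rw [h] at hL1; omega
          · exact ⟨b, Finset.mem_erase.mpr ⟨hbr1, hbR⟩, hxb⟩
      · have := totalLen_erase R r1 h1
        omega
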